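/- Let H be a real Hilbert space, f : H → ℝ a continuously differentiable function with gradient ∇f, and K a continuous map assigning to each w ∈ H a continuous linear operator K(w) : H → H that is symmetric with respect to the inner product and satisfies ‖K(w)‖ < 1/2. Let a ≤ b be real numbers and let w : ℝ → H be a differentiable curve satisfying w'(t) = −∇f(w(t)) − K(w(t))(∇f(w(t))) and a ≤ f(w(t)) ≤ b for all t ∈ ℝ. Then for all real numbers T₁ ≤ T₂, ∫_{T₁}^{T₂} ‖w'(t)‖² dt ≤ 5·(b − a). -/

import Mathlib

open scoped RealInnerProductSpace

/-- L² energy estimate (3.13): along a flow line of the perturbed negative gradient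
flow whose action values stay in `[a, b]`, one has
`∫_{T₁}^{T₂} ‖w'(t)‖² dt ≤ 5 (b - a)`. -/
theorem perturbed_gradient_flow_L2_estimate
    {H : Type*} [NormedAddCommGroup H] [InnerProductSpace ℝ H] [CompleteSpace H]
    (f : H → ℝ) (hf : ContDiff ℝ 1 f)
    (K : H → H →L[ℝ] H) (hKcont : Continuous K)
    (hKsym : ∀ w u v : H, ⟪K w u, v⟫ = ⟪u, K w v⟫)
    (hKnorm : ∀ w : H, ‖K w‖ < 1 / 2)
    (a b : ℝ) (hab : a ≤ b)
    (w : ℝ → H)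
    (hw : ∀ t : ℝ, HasDerivAt w (-(gradient f (w t)) - K (w t) (gradient f (w t))) t)
    (hfw : ∀ t : ℝ, a ≤ f (w t) ∧ f (w t) ≤ b) :
    ∀ T₁ T₂ : ℝ, T₁ ≤ T₂ →
      (∫ t in T₁..T₂, ‖deriv w t‖ ^ 2) ≤ 5 * (b - a) := by
  intro T₁ T₂ hT
  set g : ℝ → H := fun t => gradient f (w t) with hg
  set W : ℝ → H := fun t => -(g t) - K (w t) (g t) with hW
  have hwd : Differentiable ℝ w := fun t => (hw t).differentiableAt
  have hwc : Continuous w := hwd.continuous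
  have hgc : Continuous g := by
    have : Continuous (fun x : H => gradient f x) := by
      have h1 : Continuous (fun x : H => fderiv ℝ f x) := hf.continuous_fderiv one_ne_zero
      exact (InnerProductSpace.toDual ℝ H).symm.continuous.comp h1
    exact this.comp hwc
  have hWc : Continuous W := by
    exact (hgc.neg).sub ((hKcont.comp hwc).clm_apply hgc)
  set D : ℝ → ℝ := fun t => ⟪g t, W t⟫ with hD
  have hDc : Continuous D := hgc.inner hWc
  have hderiv : ∀ t, HasDerivAt (fun s => f (w s)) (D t) t := by
    intro t
    have h1 : HasGradientAt f (g t) (w t) :=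
      ((hf.differentiable one_ne_zero) (w t)).hasGradientAt
    have h2 : HasFDerivAt f ((InnerProductSpace.toDual ℝ H) (g t)) (w t) := h1
    have h3 := h2.comp_hasDerivAt t (hw t)
    simp at h3
    exact h3
  have hpt : ∀ t, ‖W t‖ ^ 2 ≤ 5 * (-D t) := by
    intro t
    set v := g t with hv
    have hKle : ‖K (w t) v‖ ≤ (1 / 2) * ‖v‖ := by
      calc ‖K (w t) v‖ ≤ ‖K (w t)‖ * ‖v‖ := (K (w t)).le_opNorm v
        _ ≤ (1 / 2) * ‖v‖ := by
            have := (hKnorm (w t)).le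
            exact mul_le_mul_of_nonneg_right this (norm_nonneg v)
    have hWle : ‖W t‖ ≤ (3 / 2) * ‖v‖ := by
      calc ‖W t‖ ≤ ‖-v‖ + ‖K (w t) v‖ := norm_sub_le _ _
        _ = ‖v‖ + ‖K (w t) v‖ := by rw [norm_neg]
        _ ≤ ‖v‖ + (1 / 2) * ‖v‖ := by linarith
        _ = (3 / 2) * ‖v‖ := by ring
    have hDle : D t = -‖v‖ ^ 2 - ⟪v, K (w t) v⟫ := by
      simp only [hD, hW]
      rw [inner_sub_right, inner_neg_right, real_inner_self_eq_norm_sq]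
    have hin : |⟪v, K (w t) v⟫| ≤ (1 / 2) * ‖v‖ ^ 2 := by
      calc |⟪v, K (w t) v⟫| ≤ ‖v‖ * ‖K (w t) v‖ := abs_real_inner_le_norm _ _
        _ ≤ ‖v‖ * ((1 / 2) * ‖v‖) :=
            mul_le_mul_of_nonneg_left hKle (norm_nonneg v)
        _ = (1 / 2) * ‖v‖ ^ 2 := by ring
    have habs := abs_le.mp hin
    have h0 : (0:ℝ) ≤ ‖W t‖ := norm_nonneg _
    have h0v : (0:ℝ) ≤ ‖v‖ := norm_nonneg _
    nlinarith [sq_nonneg (‖W t‖ - (3/2) * ‖v‖), sq_nonneg ‖v‖]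
  have hftc : (∫ t in T₁..T₂, D t) = f (w T₂) - f (w T₁) :=
    intervalIntegral.integral_eq_sub_of_hasDerivAt (fun t _ => hderiv t)
      (hDc.intervalIntegrable T₁ T₂)
  have hmono : (∫ t in T₁..T₂, ‖W t‖ ^ 2) ≤ ∫ t in T₁..T₂, 5 * (-D t) := by
    apply intervalIntegral.integral_mono_on hT
    · exact ((hWc.norm.pow 2)).intervalIntegrable T₁ T₂
    · exact (continuous_const.mul hDc.neg).intervalIntegrable T₁ T₂
    · intro t _; exact hpt t
  have hcongr : (∫ t in T₁..T₂, ‖deriv w t‖ ^ 2) = ∫ t in T₁..T₂, ‖W t‖ ^ 2 := by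
    apply intervalIntegral.integral_congr
    intro t _
    dsimp only
    rw [(hw t).deriv]
  have hcalc : (∫ t in T₁..T₂, 5 * (-D t)) = 5 * (f (w T₁) - f (w T₂)) := by
    have : (∫ t in T₁..T₂, 5 * (-D t)) = 5 * ∫ t in T₁..T₂, -D t := by
      rw [intervalIntegral.integral_const_mul]
    rw [this, intervalIntegral.integral_neg, hftc]
    ring
  have h1 := (hfw T₁).1
  have h2 := (hfw T₂).2
  have h1' := (hfw T₁).2
  have h2' := (hfw T₂).1
  rw [hcongr]
  calc (∫ t in T₁..T₂, ‖W t‖ ^ 2) ≤ ∫ t in T₁..T₂, 5 * (-D t) := hmono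
    _ = 5 * (f (w T₁) - f (w T₂)) := hcalc
    _ ≤ 5 * (b - a) := by linarith
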